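/- Any function f belonging to the feasible set, i.e., f is γ*-Lipschitz and |u_k − f(ω_k)| ≤ δ for all data points k, satisfies f̲(ω) ≤ f(ω) ≤ f̄(ω) for every ω; moreover f̄ itself satisfies |u_k − f̄(ω_k)| ≤ δ at each data point (so f̄ is consistent with the data). -/

import Mathlib

/-- Any feasible function is sandwiched between the set-membership bounds, and
the upper bound itself is consistent with the data. -/
theorem setMembership_sandwich_and_consistency
    {n N : ℕ} (hN : 0 < N)
    (f : EuclideanSpace ℝ (Fin n) → ℝ) (γ δ : ℝ)
    (hγ : 0 ≤ γ) (hδ : 0 ≤ δ)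
    (hLip : ∀ ω₁ ω₂, |f ω₁ - f ω₂| ≤ γ * ‖ω₁ - ω₂‖)
    (ω : Fin N → EuclideanSpace ℝ (Fin n)) (u : Fin N → ℝ)
    (hdata : ∀ k, |u k - f (ω k)| ≤ δ) :
    (∀ x, (Finset.univ.sup' (Finset.univ_nonempty_iff.mpr ⟨⟨0, hN⟩⟩)
        (fun k => u k - δ - γ * ‖x - ω k‖)) ≤ f x ∧
      f x ≤ (Finset.univ.inf' (Finset.univ_nonempty_iff.mpr ⟨⟨0, hN⟩⟩)
        (fun k => u k + δ + γ * ‖x - ω k‖))) ∧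
    (∀ k, |u k - (Finset.univ.inf' (Finset.univ_nonempty_iff.mpr ⟨⟨0, hN⟩⟩)
        (fun j => u j + δ + γ * ‖ω k - ω j‖))| ≤ δ) := by
  have hlow : ∀ x k, u k - δ - γ * ‖x - ω k‖ ≤ f x := by
    intro x k
    have h1 := (abs_sub_le_iff.mp (hdata k)).1
    have h2 := (abs_sub_le_iff.mp (hLip (ω k) x)).1
    rw [norm_sub_rev] at h2
    linarith
  have hhigh : ∀ x k, f x ≤ u k + δ + γ * ‖x - ω k‖ := by
    intro x k
    have h1 := (abs_sub_le_iff.mp (hdata k)).2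
    have h2 := (abs_sub_le_iff.mp (hLip x (ω k))).1
    linarith
  have hsand : ∀ x, (Finset.univ.sup' (Finset.univ_nonempty_iff.mpr ⟨⟨0, hN⟩⟩)
        (fun k => u k - δ - γ * ‖x - ω k‖)) ≤ f x ∧
      f x ≤ (Finset.univ.inf' (Finset.univ_nonempty_iff.mpr ⟨⟨0, hN⟩⟩)
        (fun k => u k + δ + γ * ‖x - ω k‖)) := by
    intro x
    constructor
    · exact Finset.sup'_le _ _ fun k _ => hlow x k
    · exact Finset.le_inf' _ _ fun k _ => hhigh x k
  refine ⟨hsand, fun k => ?_⟩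
  rw [abs_sub_le_iff]
  constructor
  · have := (hsand (ω k)).2
    have h1 := (abs_sub_le_iff.mp (hdata k)).1
    linarith
  · have hle : (Finset.univ.inf' (Finset.univ_nonempty_iff.mpr ⟨⟨0, hN⟩⟩)
        (fun j => u j + δ + γ * ‖ω k - ω j‖)) ≤ u k + δ := by
      have := Finset.inf'_le (fun j => u j + δ + γ * ‖ω k - ω j‖) (Finset.mem_univ k)
      exact le_trans this (by simp)
    linarith
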